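/- Let f : [0,∞) → ℝ be differentiable with f(r) ≥ 0 and bounded, and suppose g(r) := f'(r) + m·f(r) satisfies g'(r) ≥ m·g(r) for all r ≥ 0 (m > 0). If g(a) > 0 for some a ≥ 0, then g(r) ≥ g(a)·e^{m(r-a)} for all r ≥ a; hence if f is bounded then g(r) ≤ 0 for all r ≥ 0. -/

import Mathlib

lemma mono_aux (u : ℝ → ℝ) (a : ℝ)
    (hu : ∀ r ≥ a, DifferentiableAt ℝ u r)
    (hd : ∀ r ∈ Set.Ioi a, 0 ≤ deriv u r) :
    MonotoneOn u (Set.Ici a) := by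
  apply monotoneOn_of_deriv_nonneg (convex_Ici a)
  · exact fun x hx => (hu x hx).continuousAt.continuousWithinAt
  · intro x hx
    rw [interior_Ici] at hx
    exact (hu x (le_of_lt hx)).differentiableWithinAt
  · intro x hx
    rw [interior_Ici] at hx
    exact hd x hx

/-- Comparison step: with `g = f' + m f`, if `g' ≥ m g` on `[0,∞)` and `f` is
bounded and nonnegative, then `g(a) > 0` would force exponential growth
`g(r) ≥ g(a) e^{m(r-a)}`; consequently `g ≤ 0` on `[0,∞)`. -/
theorem stmt_1 (f : ℝ → ℝ) (m : ℝ) (hm : 0 < m)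
    (hf1 : ∀ r ≥ (0:ℝ), DifferentiableAt ℝ f r)
    (hf2 : ∀ r ≥ (0:ℝ), DifferentiableAt ℝ (deriv f) r)
    (hnn : ∀ r ≥ (0:ℝ), 0 ≤ f r)
    (hbdd : ∃ M : ℝ, ∀ r ≥ (0:ℝ), f r ≤ M)
    (g : ℝ → ℝ) (hg : ∀ r, g r = deriv f r + m * f r)
    (hgineq : ∀ r ≥ (0:ℝ), m * g r ≤ deriv g r) :
    (∀ a ≥ (0:ℝ), 0 < g a → ∀ r ≥ a, g a * Real.exp (m * (r - a)) ≤ g r) ∧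
    (∀ r ≥ (0:ℝ), g r ≤ 0) := by
  have hgfun : g = fun r => deriv f r + m * f r := funext hg
  have hgdiff : ∀ r ≥ (0:ℝ), DifferentiableAt ℝ g r := by
    intro r hr
    rw [hgfun]
    exact (hf2 r hr).add ((hf1 r hr).const_mul m)
  have key : ∀ a ≥ (0:ℝ), 0 < g a → ∀ r ≥ a, g a * Real.exp (m * (r - a)) ≤ g r := by
    intro a ha hga r hra
    have hr0 : (0:ℝ) ≤ r := le_trans ha hra
    set φ : ℝ → ℝ := fun s => g s * Real.exp (-(m * s)) with hφ
    have hφd : ∀ s ≥ (0:ℝ), HasDerivAt φ ((deriv g s - m * g s) * Real.exp (-(m * s))) s := by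
      intro s hs
      have h1 : HasDerivAt (fun x : ℝ => Real.exp (-(m * x))) (Real.exp (-(m * s)) * -m) s := by
        have := (((hasDerivAt_id s).const_mul m).neg).exp
        simpa using this
      have h2 := ((hgdiff s hs).hasDerivAt).mul h1
      exact h2.congr_deriv (by ring)
    have hmono : MonotoneOn φ (Set.Ici (0:ℝ)) := by
      apply mono_aux
      · exact fun s hs => (hφd s hs).differentiableAt
      · intro s hs
        rw [(hφd s (le_of_lt hs)).deriv]
        exact mul_nonneg (by linarith [hgineq s (le_of_lt hs)]) (Real.exp_nonneg _)
    have h := hmono (Set.mem_Ici.2 ha) (Set.mem_Ici.2 hr0) hra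
    have e1 : Real.exp (m * (r - a)) = Real.exp (-(m * a)) * Real.exp (m * r) := by
      rw [← Real.exp_add]; ring_nf
    calc g a * Real.exp (m * (r - a))
        = (g a * Real.exp (-(m * a))) * Real.exp (m * r) := by rw [e1]; ring
      _ ≤ (g r * Real.exp (-(m * r))) * Real.exp (m * r) :=
          mul_le_mul_of_nonneg_right h (Real.exp_nonneg _)
      _ = g r := by rw [mul_assoc, ← Real.exp_add]; simp
  refine ⟨key, ?_⟩
  intro r hr
  by_contra hcon
  push_neg at hcon
  obtain ⟨M, hM⟩ := hbdd
  have hgrow := key r hr hcon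
  set C := g r with hC
  set K := C * Real.exp (-(m * r)) / (2 * m) with hK
  have hKpos : 0 < K := by
    apply div_pos (mul_pos hcon (Real.exp_pos _)) (by linarith)
  set ψ : ℝ → ℝ := fun s => f s * Real.exp (m * s) - K * Real.exp (2 * m * s) with hψ
  have hψd : ∀ s ≥ (0:ℝ), HasDerivAt ψ
      (g s * Real.exp (m * s) - K * (Real.exp (2 * m * s) * (2 * m))) s := by
    intro s hs
    have hexp : HasDerivAt (fun x : ℝ => Real.exp (m * x)) (Real.exp (m * s) * m) s := by
      have := ((hasDerivAt_id s).const_mul m).exp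
      simpa using this
    have hexp2 : HasDerivAt (fun x : ℝ => Real.exp (2 * m * x)) (Real.exp (2 * m * s) * (2 * m)) s := by
      have := ((hasDerivAt_id s).const_mul (2 * m)).exp
      simpa using this
    have h1 := ((hf1 s hs).hasDerivAt).mul hexp
    have h2 := h1.sub (hexp2.const_mul K)
    exact h2.congr_deriv (by rw [hg s]; ring)
  have hψmono : MonotoneOn ψ (Set.Ici r) := by
    apply mono_aux
    · exact fun s hs => (hψd s (le_trans hr hs)).differentiableAt
    · intro s hs
      have hsr : r ≤ s := le_of_lt hs
      have hs0 : (0:ℝ) ≤ s := le_trans hr hsr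
      rw [(hψd s hs0).deriv]
      have hge := hgrow s hsr
      have e2 : Real.exp (m * (s - r)) * Real.exp (m * s)
          = Real.exp (-(m * r)) * Real.exp (2 * m * s) := by
        rw [← Real.exp_add, ← Real.exp_add]; ring_nf
      have h3 : C * Real.exp (m * (s - r)) * Real.exp (m * s) ≤ g s * Real.exp (m * s) :=
        mul_le_mul_of_nonneg_right hge (Real.exp_nonneg _)
      have h4 : C * Real.exp (m * (s - r)) * Real.exp (m * s)
          = K * (Real.exp (2 * m * s) * (2 * m)) := by
        rw [mul_assoc, e2, hK]
        field_simp
      linarith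
  -- pick a large s to contradict boundedness
  set s := max r ((M + K * Real.exp (2 * m * r) + 1) / (K * m)) with hs
  have hsr : r ≤ s := le_max_left _ _
  have hs0 : (0:ℝ) ≤ s := le_trans hr hsr
  have hψs := hψmono (Set.mem_Ici.2 (le_refl r)) (Set.mem_Ici.2 hsr) hsr
  -- ψ r ≤ ψ s
  have hfr : 0 ≤ f r := hnn r hr
  have hfs : f s ≤ M := hM s hs0
  have hKm : 0 < K * m := mul_pos hKpos hm
  have hsl : (M + K * Real.exp (2 * m * r) + 1) / (K * m) ≤ s := le_max_right _ _
  have hbig : M + K * Real.exp (2 * m * r) + 1 ≤ K * m * s := by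
    rw [div_le_iff₀ hKm] at hsl
    linarith [hsl]
  have hexpms : m * s + 1 ≤ Real.exp (m * s) := Real.add_one_le_exp _
  have hexpms_le : Real.exp (-(m * s)) ≤ 1 := Real.exp_le_one_iff.2 (by nlinarith)
  -- from ψ r ≤ ψ s:
  -- f s * exp(m s) ≥ f r * exp(m r) - K exp(2 m r) + K exp(2 m s)
  have hfrexp : 0 ≤ f r * Real.exp (m * r) := mul_nonneg hfr (Real.exp_nonneg _)
  have h5 : K * Real.exp (2 * m * s) - K * Real.exp (2 * m * r) ≤ f s * Real.exp (m * s) := by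
    simp only [hψ] at hψs
    linarith
  have e3 : Real.exp (2 * m * s) = Real.exp (m * s) * Real.exp (m * s) := by
    rw [← Real.exp_add]; ring_nf
  have hexpms_pos := Real.exp_pos (m * s)
  -- f s ≥ K exp(m s) - K exp(2 m r) * exp(-(m s)) ≥ K exp(m s) - K exp(2 m r)
  have hE1 : 1 ≤ Real.exp (m * s) := Real.one_le_exp (by nlinarith)
  have h6 : K * Real.exp (m * s) - K * Real.exp (2 * m * r) ≤ f s := by
    nlinarith [h5, e3, hexpms_pos, hE1,
      mul_nonneg hKpos.le (Real.exp_nonneg (2 * m * r))]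
  have h7 : K * (m * s) ≤ K * Real.exp (m * s) := by nlinarith
  nlinarith
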